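/- (Theorem 3(ii)) For the Ulam-Warburton cellular automaton, u(1) = 1 and, for every n >= 2, u(n) = 4 * 3^(wt(n-1) - 1). -/

import Mathlib

/-- The four von Neumann neighbors of a cell in `ℤ × ℤ`. -/
def vnNbrs (p : ℤ × ℤ) : Finset (ℤ × ℤ) :=
  {(p.1 - 1, p.2), (p.1 + 1, p.2), (p.1, p.2 - 1), (p.1, p.2 + 1)}

/-- The binary weight of `n`: the number of 1s in the binary expansion of `n`. -/
def wt (n : ℕ) : ℕ := (Nat.digits 2 n).sum


noncomputable def D : ℕ → ℕ → ℕ∞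
  | x, 0 => x
  | 0, y => y
  | x+1, y+1 =>
    if (x+1) % 2 = 0 then
      if (y+1) % 2 = 0 then 2 * D ((x+1)/2) ((y+1)/2)
      else 1 + min (2 * D ((x+1)/2) (y/2)) (2 * D ((x+1)/2) ((y+2)/2))
    else
      if (y+1) % 2 = 0 then 1 + min (2 * D (x/2) ((y+1)/2)) (2 * D ((x+2)/2) ((y+1)/2))
      else ⊤
termination_by x y => x + y
decreasing_by all_goals omega

lemma D_x0 (x : ℕ) : D x 0 = x := by cases x <;> simp [D]
lemma D_0y (y : ℕ) : D 0 y = y := by cases y <;> simp [D]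

-- ENat helpers
lemma two_mul_eq_coe {t : ℕ∞} {k : ℕ} (h : 2*t = (k:ℕ∞)) : ∃ j : ℕ, t = (j:ℕ∞) ∧ k = 2*j := by
  have ht : t ≠ ⊤ := by
    intro h'; subst h'; rw [ENat.mul_top (by norm_num)] at h; exact (by simp at h)
  lift t to ℕ using ht
  exact ⟨t, rfl, by exact_mod_cast h.symm⟩

lemma one_add_eq_coe {t : ℕ∞} {k : ℕ} (h : 1 + t = (k:ℕ∞)) : ∃ j : ℕ, t = (j:ℕ∞) ∧ k = 1+j := by
  have ht : t ≠ ⊤ := by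
    intro h'; subst h'; rw [add_top] at h; exact (by simp at h)
  lift t to ℕ using ht
  exact ⟨t, rfl, by exact_mod_cast h.symm⟩

lemma min_cases' (A B : ℕ∞) : min A B = A ∨ min A B = B := by
  rcases le_total A B with h | h
  · exact Or.inl (min_eq_left h)
  · exact Or.inr (min_eq_right h)

lemma D_half (a b : ℕ) : D (2*a) (2*b) = 2 * D a b := by
  rcases Nat.eq_zero_or_pos a with ha | ha
  · subst ha; simp only [Nat.mul_zero, D_0y]; push_cast; ring
  · rcases Nat.eq_zero_or_pos b with hb | hb
    · subst hb; simp only [Nat.mul_zero, D_x0]; push_cast; ring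
    · obtain ⟨a', rfl⟩ : ∃ a', a = a'+1 := ⟨a-1, by omega⟩
      obtain ⟨b', rfl⟩ : ∃ b', b = b'+1 := ⟨b-1, by omega⟩
      rw [show 2*(a'+1) = (2*a'+1)+1 by ring, show 2*(b'+1) = (2*b'+1)+1 by ring, D]
      simp only [show ((2*a'+1)+1) % 2 = 0 by omega, show ((2*b'+1)+1) % 2 = 0 by omega, if_true]
      congr 2 <;> omega

lemma D_oddodd {x y : ℕ} (hx : x % 2 = 1) (hy : y % 2 = 1) : D x y = ⊤ := by
  obtain ⟨a, rfl⟩ : ∃ a, x = a+1 := ⟨x-1, by omega⟩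
  obtain ⟨b, rfl⟩ : ∃ b, y = b+1 := ⟨y-1, by omega⟩
  rw [D]
  simp [show ¬((a+1) % 2 = 0) by omega, show ¬((b+1) % 2 = 0) by omega]

lemma D_oddx {x y : ℕ} (hx : x % 2 = 1) (hy : y % 2 = 0) :
    D x y = 1 + min (D (x-1) y) (D (x+1) y) := by
  rcases Nat.eq_zero_or_pos y with hy0 | hy0
  · subst hy0
    rw [D_x0, D_x0, D_x0]
    have hmin : min ((↑(x-1):ℕ∞)) (↑(x+1)) = ((x-1:ℕ):ℕ∞) :=
      min_eq_left (by exact_mod_cast (by omega : x-1 ≤ x+1))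
    rw [hmin]
    obtain ⟨a, rfl⟩ : ∃ a, x = a+1 := ⟨x-1, by omega⟩
    simp only [Nat.add_sub_cancel]; push_cast; ring
  · obtain ⟨b, hb⟩ : ∃ b, y = b+1 := ⟨y-1, by omega⟩
    obtain ⟨a, rfl⟩ : ∃ a, x = a+1 := ⟨x-1, by omega⟩
    rw [hb, D]
    simp only [show ¬((a+1) % 2 = 0) by omega, if_false, show (b+1) % 2 = 0 by omega, if_true]
    have e1 : D (a+1-1) (b+1) = 2 * D (a/2) ((b+1)/2) := by
      rw [show a+1-1 = 2*(a/2) by omega, show b+1 = 2*((b+1)/2) by omega, D_half]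
      congr 2 <;> omega
    have e2 : D (a+1+1) (b+1) = 2 * D ((a+2)/2) ((b+1)/2) := by
      rw [show a+1+1 = 2*((a+2)/2) by omega, show b+1 = 2*((b+1)/2) by omega, D_half]
      congr 2 <;> omega
    rw [e1, e2]

lemma D_oddy {x y : ℕ} (hx : x % 2 = 0) (hy : y % 2 = 1) :
    D x y = 1 + min (D x (y-1)) (D x (y+1)) := by
  rcases Nat.eq_zero_or_pos x with hx0 | hx0
  · subst hx0
    rw [D_0y, D_0y, D_0y]
    have hmin : min ((↑(y-1):ℕ∞)) (↑(y+1)) = ((y-1:ℕ):ℕ∞) :=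
      min_eq_left (by exact_mod_cast (by omega : y-1 ≤ y+1))
    rw [hmin]
    obtain ⟨a, rfl⟩ : ∃ a, y = a+1 := ⟨y-1, by omega⟩
    simp only [Nat.add_sub_cancel]; push_cast; ring
  · obtain ⟨a, ha⟩ : ∃ a, x = a+1 := ⟨x-1, by omega⟩
    obtain ⟨b, rfl⟩ : ∃ b, y = b+1 := ⟨y-1, by omega⟩
    rw [ha, D]
    simp only [show (a+1) % 2 = 0 by omega, if_true, show ¬((b+1) % 2 = 0) by omega, if_false]
    have e1 : D (a+1) (b+1-1) = 2 * D ((a+1)/2) (b/2) := by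
      rw [show a+1 = 2*((a+1)/2) by omega, show b+1-1 = 2*(b/2) by omega, D_half]
      congr 2 <;> omega
    have e2 : D (a+1) (b+1+1) = 2 * D ((a+1)/2) ((b+2)/2) := by
      rw [show a+1 = 2*((a+1)/2) by omega, show b+1+1 = 2*((b+2)/2) by omega, D_half]
      congr 2 <;> omega
    rw [e1, e2]

lemma D_lb : ∀ s x y, x + y = s → (((x+y : ℕ)) : ℕ∞) ≤ D x y := by
  intro s
  induction s using Nat.strong_induction_on with
  | _ s ih =>
    intro x y hs
    rcases Nat.eq_zero_or_pos y with hy0 | hy0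
    · subst hy0; rw [D_x0]; exact_mod_cast (by omega : x+0 ≤ x)
    rcases Nat.eq_zero_or_pos x with hx0 | hx0
    · subst hx0; rw [D_0y]; exact_mod_cast (by omega : 0+y ≤ y)
    rcases Nat.mod_two_eq_zero_or_one x with hx | hx <;>
      rcases Nat.mod_two_eq_zero_or_one y with hy | hy
    · -- both even
      rw [show x = 2*(x/2) by omega, show y = 2*(y/2) by omega, D_half]
      have h1 := ih (x/2 + y/2) (by omega) (x/2) (y/2) rfl
      calc (((2*(x/2)+2*(y/2) : ℕ)) : ℕ∞) = 2 * (((x/2+y/2 : ℕ)) : ℕ∞) := by push_cast; ring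
        _ ≤ 2 * D (x/2) (y/2) := mul_le_mul_right h1 2
    · -- x even, y odd
      rw [D_oddy hx hy]
      have e1 : D x (y-1) = 2 * D (x/2) ((y-1)/2) := by
        rw [show x = 2*(x/2) by omega, show y-1 = 2*((y-1)/2) by omega, D_half]
        congr 2 <;> omega
      have e2 : D x (y+1) = 2 * D (x/2) ((y+1)/2) := by
        rw [show x = 2*(x/2) by omega, show y+1 = 2*((y+1)/2) by omega, D_half]
        congr 2 <;> omega
      have h1 := ih (x/2 + (y-1)/2) (by omega) (x/2) ((y-1)/2) rfl
      have h2 := ih (x/2 + (y+1)/2) (by omega) (x/2) ((y+1)/2) rfl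
      have b1 : (((x+y-1 : ℕ)):ℕ∞) ≤ D x (y-1) := by
        rw [e1]
        calc (((x+y-1 : ℕ)):ℕ∞) = 2 * (((x/2+(y-1)/2 : ℕ)) : ℕ∞) := by
              rw [show x+y-1 = 2*(x/2+(y-1)/2) by omega]; push_cast; ring
          _ ≤ _ := mul_le_mul_right h1 2
      have b2 : (((x+y-1 : ℕ)):ℕ∞) ≤ D x (y+1) := by
        rw [e2]
        calc (((x+y-1 : ℕ)):ℕ∞) ≤ (((x+y+1 : ℕ)):ℕ∞) := by exact_mod_cast (by omega : x+y-1 ≤ x+y+1)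
          _ = 2 * (((x/2+(y+1)/2 : ℕ)) : ℕ∞) := by
              rw [show x+y+1 = 2*(x/2+(y+1)/2) by omega]; push_cast; ring
          _ ≤ _ := mul_le_mul_right h2 2
      calc (((x+y : ℕ)):ℕ∞) ≤ 1 + (((x+y-1 : ℕ)):ℕ∞) := by
            exact_mod_cast (by omega : x+y ≤ 1+(x+y-1))
        _ ≤ 1 + min (D x (y-1)) (D x (y+1)) := add_le_add_right (le_min b1 b2) 1
    · -- x odd, y even
      rw [D_oddx hx hy]
      have e1 : D (x-1) y = 2 * D ((x-1)/2) (y/2) := by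
        rw [show x-1 = 2*((x-1)/2) by omega, show y = 2*(y/2) by omega, D_half]
        congr 2 <;> omega
      have e2 : D (x+1) y = 2 * D ((x+1)/2) (y/2) := by
        rw [show x+1 = 2*((x+1)/2) by omega, show y = 2*(y/2) by omega, D_half]
        congr 2 <;> omega
      have h1 := ih ((x-1)/2 + y/2) (by omega) ((x-1)/2) (y/2) rfl
      have h2 := ih ((x+1)/2 + y/2) (by omega) ((x+1)/2) (y/2) rfl
      have b1 : (((x+y-1 : ℕ)):ℕ∞) ≤ D (x-1) y := by
        rw [e1]
        calc (((x+y-1 : ℕ)):ℕ∞) = 2 * ((((x-1)/2+y/2 : ℕ)) : ℕ∞) := by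
              rw [show x+y-1 = 2*((x-1)/2+y/2) by omega]; push_cast; ring
          _ ≤ _ := mul_le_mul_right h1 2
      have b2 : (((x+y-1 : ℕ)):ℕ∞) ≤ D (x+1) y := by
        rw [e2]
        calc (((x+y-1 : ℕ)):ℕ∞) ≤ (((x+y+1 : ℕ)):ℕ∞) := by exact_mod_cast (by omega : x+y-1 ≤ x+y+1)
          _ = 2 * ((((x+1)/2+y/2 : ℕ)) : ℕ∞) := by
              rw [show x+y+1 = 2*((x+1)/2+y/2) by omega]; push_cast; ring
          _ ≤ _ := mul_le_mul_right h2 2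
      calc (((x+y : ℕ)):ℕ∞) ≤ 1 + (((x+y-1 : ℕ)):ℕ∞) := by
            exact_mod_cast (by omega : x+y ≤ 1+(x+y-1))
        _ ≤ 1 + min (D (x-1) y) (D (x+1) y) := add_le_add_right (le_min b1 b2) 1
    · rw [D_oddodd hx hy]; exact le_top

lemma D_parity {x y k : ℕ} (h : D x y = (k:ℕ∞)) : k % 2 = (x+y) % 2 := by
  rcases Nat.eq_zero_or_pos y with hy0 | hy0
  · subst hy0; rw [D_x0] at h
    have hxk : x = k := by exact_mod_cast h
    omega
  rcases Nat.eq_zero_or_pos x with hx0 | hx0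
  · subst hx0; rw [D_0y] at h
    have hyk : y = k := by exact_mod_cast h
    omega
  rcases Nat.mod_two_eq_zero_or_one x with hx | hx <;>
    rcases Nat.mod_two_eq_zero_or_one y with hy | hy
  · rw [show x = 2*(x/2) by omega, show y = 2*(y/2) by omega, D_half] at h
    obtain ⟨j, _, hk⟩ := two_mul_eq_coe h
    omega
  · rw [D_oddy hx hy] at h
    obtain ⟨j, hj, hk⟩ := one_add_eq_coe h
    have e1 : D x (y-1) = 2 * D (x/2) ((y-1)/2) := by
      rw [show x = 2*(x/2) by omega, show y-1 = 2*((y-1)/2) by omega, D_half]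
      congr 2 <;> omega
    have e2 : D x (y+1) = 2 * D (x/2) ((y+1)/2) := by
      rw [show x = 2*(x/2) by omega, show y+1 = 2*((y+1)/2) by omega, D_half]
      congr 2 <;> omega
    rcases min_cases' (D x (y-1)) (D x (y+1)) with hm | hm <;> rw [hm] at hj
    · rw [e1] at hj; obtain ⟨i, _, hji⟩ := two_mul_eq_coe hj; omega
    · rw [e2] at hj; obtain ⟨i, _, hji⟩ := two_mul_eq_coe hj; omega
  · rw [D_oddx hx hy] at h
    obtain ⟨j, hj, hk⟩ := one_add_eq_coe h
    have e1 : D (x-1) y = 2 * D ((x-1)/2) (y/2) := by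
      rw [show x-1 = 2*((x-1)/2) by omega, show y = 2*(y/2) by omega, D_half]
      congr 2 <;> omega
    have e2 : D (x+1) y = 2 * D ((x+1)/2) (y/2) := by
      rw [show x+1 = 2*((x+1)/2) by omega, show y = 2*(y/2) by omega, D_half]
      congr 2 <;> omega
    rcases min_cases' (D (x-1) y) (D (x+1) y) with hm | hm <;> rw [hm] at hj
    · rw [e1] at hj; obtain ⟨i, _, hji⟩ := two_mul_eq_coe hj; omega
    · rw [e2] at hj; obtain ⟨i, _, hji⟩ := two_mul_eq_coe hj; omega
  · rw [D_oddodd hx hy] at h; simp at h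


noncomputable def Dz (p : ℤ × ℤ) : ℕ∞ := D p.1.natAbs p.2.natAbs

lemma mem_vnNbrs {q p : ℤ × ℤ} : q ∈ vnNbrs p ↔
    q = (p.1 - 1, p.2) ∨ q = (p.1 + 1, p.2) ∨ q = (p.1, p.2 - 1) ∨ q = (p.1, p.2 + 1) := by
  simp [vnNbrs]

lemma card_vnNbrs (p : ℤ × ℤ) : (vnNbrs p).card = 4 := by
  rw [vnNbrs]
  rw [Finset.card_insert_of_notMem, Finset.card_insert_of_notMem,
      Finset.card_insert_of_notMem, Finset.card_singleton] <;>
    simp [Prod.ext_iff] <;> omega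

lemma vnNbrs_translate {q p t : ℤ × ℤ} (h : q ∈ vnNbrs p) : q + t ∈ vnNbrs (p + t) := by
  rcases mem_vnNbrs.1 h with rfl | rfl | rfl | rfl <;>
    simp [mem_vnNbrs, Prod.ext_iff] <;> ring_nf <;> simp
lemma vnNbrs_symm {q p : ℤ × ℤ} (h : q ∈ vnNbrs p) : p ∈ vnNbrs q := by
  rcases mem_vnNbrs.1 h with rfl | rfl | rfl | rfl <;> simp [mem_vnNbrs, Prod.ext_iff]

lemma enat_coe_mul (j : ℕ) : (2*(j:ℕ∞)) = ((2*j : ℕ):ℕ∞) := by push_cast; ring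

lemma enat_two_mul_inj {a b : ℕ∞} (h : 2*a = 2*b) : a = b := by
  induction a using ENat.recTopCoe with
  | top =>
    induction b using ENat.recTopCoe with
    | top => rfl
    | coe j => rw [ENat.mul_top (by norm_num), enat_coe_mul] at h
               exact absurd h.symm (ENat.coe_ne_top _)
  | coe i =>
    induction b using ENat.recTopCoe with
    | top => rw [ENat.mul_top (by norm_num), enat_coe_mul] at h
             exact absurd h (ENat.coe_ne_top _)
    | coe j => rw [enat_coe_mul, enat_coe_mul] at h
               have : 2*i = 2*j := by exact_mod_cast h
               exact_mod_cast (by omega : i = j)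

lemma Dz_half (x y : ℤ) : Dz (2*x, 2*y) = 2 * Dz (x, y) := by
  unfold Dz
  simp only [Int.natAbs_mul]
  exact D_half x.natAbs y.natAbs

lemma Dz_oddx {x y : ℤ} (hx : x % 2 = 1) (hy : y % 2 = 0) :
    Dz (x, y) = 1 + min (Dz (x-1, y)) (Dz (x+1, y)) := by
  unfold Dz
  have hX : x.natAbs % 2 = 1 := by omega
  have hY : y.natAbs % 2 = 0 := by omega
  rcases lt_trichotomy x 0 with hneg | h0 | hpos
  · have n1 : (x-1).natAbs = x.natAbs + 1 := by omega
    have n2 : (x+1).natAbs = x.natAbs - 1 := by omega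
    rw [n1, n2, min_comm]
    exact D_oddx hX hY
  · omega
  · have n1 : (x-1).natAbs = x.natAbs - 1 := by omega
    have n2 : (x+1).natAbs = x.natAbs + 1 := by omega
    rw [n1, n2]
    exact D_oddx hX hY

lemma Dz_oddy {x y : ℤ} (hx : x % 2 = 0) (hy : y % 2 = 1) :
    Dz (x, y) = 1 + min (Dz (x, y-1)) (Dz (x, y+1)) := by
  unfold Dz
  have hX : x.natAbs % 2 = 0 := by omega
  have hY : y.natAbs % 2 = 1 := by omega
  rcases lt_trichotomy y 0 with hneg | h0 | hpos
  · have n1 : (y-1).natAbs = y.natAbs + 1 := by omega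
    have n2 : (y+1).natAbs = y.natAbs - 1 := by omega
    rw [n1, n2, min_comm]
    exact D_oddy hX hY
  · omega
  · have n1 : (y-1).natAbs = y.natAbs - 1 := by omega
    have n2 : (y+1).natAbs = y.natAbs + 1 := by omega
    rw [n1, n2]
    exact D_oddy hX hY

lemma Dz_oddodd {x y : ℤ} (hx : x % 2 = 1) (hy : y % 2 = 1) : Dz (x, y) = ⊤ :=
  D_oddodd (by omega) (by omega)

lemma Dz_lb (p : ℤ × ℤ) : (((p.1.natAbs + p.2.natAbs : ℕ)) : ℕ∞) ≤ Dz p :=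
  D_lb _ _ _ rfl

lemma Dz_parity {p : ℤ × ℤ} {k : ℕ} (h : Dz p = (k:ℕ∞)) :
    k % 2 = (p.1.natAbs + p.2.natAbs) % 2 := D_parity h

lemma Dz_zero : Dz (0, 0) = 0 := by unfold Dz; simp [D_x0]

lemma Dz_flank_ne {x y : ℤ} (hx : x % 2 = 1) (hy : y % 2 = 0)
    (h : Dz (x-1, y) = Dz (x+1, y)) : Dz (x-1, y) = ⊤ := by
  obtain ⟨c, hc⟩ : ∃ c, x-1 = 2*c := ⟨(x-1)/2, by omega⟩
  obtain ⟨d, hd⟩ : ∃ d, y = 2*d := ⟨y/2, by omega⟩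
  have e1 : Dz (x-1, y) = 2 * Dz (c, d) := by rw [hc, hd, Dz_half]
  have e2 : Dz (x+1, y) = 2 * Dz (c+1, d) := by
    rw [show x+1 = 2*(c+1) by omega, hd, Dz_half]
  rw [e1, e2] at h
  have h' := enat_two_mul_inj h
  by_contra hne
  have h1 : Dz (c, d) ≠ ⊤ := by
    rw [e1] at hne
    intro hT; rw [hT, ENat.mul_top (by norm_num)] at hne; exact hne rfl
  obtain ⟨j, hj⟩ := WithTop.ne_top_iff_exists.mp h1
  have hcd : Dz (c, d) = (j : ℕ∞) := hj.symm
  have hj2 : Dz (c + 1, d) = (j : ℕ∞) := by rw [← h']; exact hcd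
  have p1 := Dz_parity hcd
  have p2 := Dz_parity hj2
  simp only at p1 p2
  omega

lemma enat_ne_top_iff {t : ℕ∞} : t ≠ ⊤ ↔ ∃ v : ℕ, t = (v:ℕ∞) := by
  constructor
  · intro h
    induction t using ENat.recTopCoe with
    | top => exact absurd rfl h
    | coe v => exact ⟨v, rfl⟩
  · rintro ⟨v, rfl⟩; exact ENat.coe_ne_top v

lemma Dz_flank_ne' {x y : ℤ} (hx : x % 2 = 0) (hy : y % 2 = 1)
    (h : Dz (x, y-1) = Dz (x, y+1)) : Dz (x, y-1) = ⊤ := by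
  obtain ⟨c, hc⟩ : ∃ c, y-1 = 2*c := ⟨(y-1)/2, by omega⟩
  obtain ⟨d, hd⟩ : ∃ d, x = 2*d := ⟨x/2, by omega⟩
  have e1 : Dz (x, y-1) = 2 * Dz (d, c) := by rw [hc, hd, Dz_half]
  have e2 : Dz (x, y+1) = 2 * Dz (d, c+1) := by
    rw [show y+1 = 2*(c+1) by omega, hd, Dz_half]
  rw [e1, e2] at h
  have h' := enat_two_mul_inj h
  by_contra hne
  have h1 : Dz (d, c) ≠ ⊤ := by
    rw [e1] at hne
    intro hT; rw [hT, ENat.mul_top (by norm_num)] at hne; exact hne rfl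
  obtain ⟨j, hcd⟩ := enat_ne_top_iff.mp h1
  have hj2 : Dz (d, c + 1) = (j : ℕ∞) := by rw [← h']; exact hcd
  have p1 := Dz_parity hcd
  have p2 := Dz_parity hj2
  simp only at p1 p2
  omega

-- more ENat helpers
lemma enat_add_one_le {j : ℕ} {B : ℕ∞} (h : (j:ℕ∞) < B) : ((j+1 : ℕ):ℕ∞) ≤ B := by
  induction B using ENat.recTopCoe with
  | top => exact le_top
  | coe b => exact_mod_cast (by exact_mod_cast h : j < b)

lemma one_add_eq_top {t : ℕ∞} (h : 1 + t = ⊤) : t = ⊤ := by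
  induction t using ENat.recTopCoe with
  | top => rfl
  | coe b => rw [show (1:ℕ∞) + (b:ℕ∞) = ((1+b : ℕ):ℕ∞) by push_cast; ring] at h
             exact absurd h (ENat.coe_ne_top _)

lemma two_mul_eq_top {t : ℕ∞} (h : 2*t = ⊤) : t = ⊤ := by
  induction t using ENat.recTopCoe with
  | top => rfl
  | coe b => rw [enat_coe_mul] at h; exact absurd h (ENat.coe_ne_top _)

lemma Dz_flank (x' y' : ℤ) : ∀ s' ∈ vnNbrs ((x':ℤ), (y':ℤ)),
    Dz (s' + (x', y')) = 1 + min (2 * Dz s') (Dz (2*x', 2*y')) := by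
  intro s' hs'
  rcases mem_vnNbrs.1 hs' with rfl | rfl | rfl | rfl
  · have hpt : ((x':ℤ) - 1, (y':ℤ)).1 = x' - 1 := rfl
    have hsum : ((x':ℤ)-1, (y':ℤ)) + (x', y') = (2*x'-1, 2*y') := by
      simp only [Prod.mk_add_mk, Prod.mk.injEq]; constructor <;> ring
    rw [hsum, Dz_oddx (by omega) (by omega)]
    rw [show (2*x'-1-1 : ℤ) = 2*(x'-1) by ring, show (2*x'-1+1 : ℤ) = 2*x' by ring,
      Dz_half]
  · have hsum : ((x':ℤ)+1, (y':ℤ)) + (x', y') = (2*x'+1, 2*y') := by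
      simp only [Prod.mk_add_mk, Prod.mk.injEq]; constructor <;> ring
    rw [hsum, Dz_oddx (by omega) (by omega)]
    rw [show (2*x'+1-1 : ℤ) = 2*x' by ring, show (2*x'+1+1 : ℤ) = 2*(x'+1) by ring,
      Dz_half, Dz_half, min_comm]
  · have hsum : ((x':ℤ), (y':ℤ)-1) + (x', y') = (2*x', 2*y'-1) := by
      simp only [Prod.mk_add_mk, Prod.mk.injEq]; constructor <;> ring
    rw [hsum, Dz_oddy (by omega) (by omega)]
    rw [show (2*y'-1-1 : ℤ) = 2*(y'-1) by ring, show (2*y'-1+1 : ℤ) = 2*y' by ring,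
      Dz_half]
  · have hsum : ((x':ℤ), (y':ℤ)+1) + (x', y') = (2*x', 2*y'+1) := by
      simp only [Prod.mk_add_mk, Prod.mk.injEq]; constructor <;> ring
    rw [hsum, Dz_oddy (by omega) (by omega)]
    rw [show (2*y'+1-1 : ℤ) = 2*y' by ring, show (2*y'+1+1 : ℤ) = 2*(y'+1) by ring,
      Dz_half, Dz_half, min_comm]
lemma vn_up (x' y' : ℤ) : ∀ s' ∈ vnNbrs ((x':ℤ), (y':ℤ)), s' + (x', y') ∈ vnNbrs ((2*x':ℤ), (2*y':ℤ)) := by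
  intro s' hs'
  have := vnNbrs_translate (t := ((x':ℤ), (y':ℤ))) hs'
  rwa [show ((x':ℤ), (y':ℤ)) + (x', y') = ((2*x':ℤ), (2*y':ℤ)) by simp only [Prod.mk_add_mk, Prod.mk.injEq]; constructor <;> ring] at this
lemma vn_down (x' y' : ℤ) : ∀ r ∈ vnNbrs ((2*x':ℤ), (2*y':ℤ)), r - (x', y') ∈ vnNbrs ((x':ℤ), (y':ℤ)) ∧ (r - (x',y')) + (x',y') = r := by
  intro r hr
  constructor
  · have := vnNbrs_translate (t := (-(x':ℤ), -(y':ℤ))) hr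
    rw [show ((2*x':ℤ), (2*y':ℤ)) + (-(x':ℤ), -(y':ℤ)) = ((x':ℤ), (y':ℤ)) by simp only [Prod.mk_add_mk, Prod.mk.injEq]; constructor <;> ring] at this
    rwa [show r + (-(x':ℤ), -(y':ℤ)) = r - ((x':ℤ), (y':ℤ)) by cases r; simp [Prod.ext_iff, sub_eq_add_neg]] at this
  · simp [Prod.ext_iff]

def M1P (p : ℤ × ℤ) : Prop := ∀ k : ℕ, Dz p = (k:ℕ∞) →
  ∃ q ∈ vnNbrs p, Dz q = ((k-1 : ℕ):ℕ∞) ∧ ∀ r ∈ vnNbrs p, r ≠ q → ((k:ℕ):ℕ∞) ≤ Dz r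

def M2P (p : ℤ × ℤ) : Prop := Dz p = ⊤ →
  (∀ q ∈ vnNbrs p, Dz q = ⊤) ∨
  ∃ q ∈ vnNbrs p, ∃ r ∈ vnNbrs p, q ≠ r ∧ Dz r = Dz q ∧ Dz q ≠ ⊤ ∧
    ∀ s ∈ vnNbrs p, Dz q ≤ Dz s

theorem master : ∀ N : ℕ, ∀ x y : ℤ, (x, y) ≠ ((0:ℤ), (0:ℤ)) →
    x.natAbs + y.natAbs = N → M1P (x, y) ∧ M2P (x, y) := by
  intro N
  induction N using Nat.strong_induction_on with
  | _ N ih =>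
    intro x y hp0 hN
    have hx2 : x % 2 = 0 ∨ x % 2 = 1 := by omega
    have hy2 : y % 2 = 0 ∨ y % 2 = 1 := by omega
    rcases hx2 with hx | hx <;> rcases hy2 with hy | hy
    · -- both even
      rcases eq_or_ne y 0 with rfl | hy0
      · -- y = 0, x ≠ 0
        have hx0 : x ≠ 0 := by
          intro h; exact hp0 (by simp [h])
        have hDp : Dz (x, 0) = ((x.natAbs : ℕ) : ℕ∞) := by
          unfold Dz; simp [D_x0]
        constructor
        · intro k hk
          have hkx : k = x.natAbs := by rw [hDp] at hk; exact_mod_cast hk.symm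
          subst hkx
          rcases lt_or_gt_of_ne hx0 with hneg | hpos
          · refine ⟨(x+1, 0), by simp [mem_vnNbrs], ?_, ?_⟩
            · have : (x+1).natAbs = x.natAbs - 1 := by omega
              unfold Dz; simp only [this]; simp [D_x0]
            · intro r hr hrne
              rcases mem_vnNbrs.1 hr with rfl | rfl | rfl | rfl
              · -- (x-1, 0)
                have : (x-1).natAbs = x.natAbs + 1 := by omega
                unfold Dz; simp only [this]; simp only [Int.natAbs_zero, D_x0]
                exact_mod_cast (by omega : x.natAbs ≤ x.natAbs + 1)
              · simp at hrne
              · -- (x, -1)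
                have hoy : (-1 : ℤ) % 2 = 1 := by decide
                rw [show ((x:ℤ), (0:ℤ)-1) = (x, -1) by norm_num, Dz_oddy hx hoy]
                have b1 : ((x.natAbs : ℕ):ℕ∞) ≤ Dz (x, -1-1) := by
                  refine le_trans ?_ (Dz_lb (x, -1-1))
                  exact_mod_cast (by omega : x.natAbs ≤ x.natAbs + (-1-1 : ℤ).natAbs)
                have b2 : ((x.natAbs : ℕ):ℕ∞) ≤ Dz (x, -1+1) := by
                  rw [show ((x:ℤ), (-1:ℤ)+1) = (x, 0) by norm_num, hDp]
                have : ((x.natAbs : ℕ):ℕ∞) ≤ min (Dz (x, -1-1)) (Dz (x, -1+1)) := le_min b1 b2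
                exact le_trans this (by exact le_add_self)
              · -- (x, 1)
                have hoy : (1 : ℤ) % 2 = 1 := by decide
                rw [show ((x:ℤ), (0:ℤ)+1) = (x, 1) by norm_num, Dz_oddy hx hoy]
                have b1 : ((x.natAbs : ℕ):ℕ∞) ≤ Dz (x, 1-1) := by
                  rw [show ((x:ℤ), (1:ℤ)-1) = (x, 0) by norm_num, hDp]
                have b2 : ((x.natAbs : ℕ):ℕ∞) ≤ Dz (x, 1+1) := by
                  refine le_trans ?_ (Dz_lb (x, 1+1))
                  exact_mod_cast (by omega : x.natAbs ≤ x.natAbs + (1+1 : ℤ).natAbs)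
                have : ((x.natAbs : ℕ):ℕ∞) ≤ min (Dz (x, 1-1)) (Dz (x, 1+1)) := le_min b1 b2
                exact le_trans this (by exact le_add_self)
          · refine ⟨(x-1, 0), by simp [mem_vnNbrs], ?_, ?_⟩
            · have : (x-1).natAbs = x.natAbs - 1 := by omega
              unfold Dz; simp only [this]; simp [D_x0]
            · intro r hr hrne
              rcases mem_vnNbrs.1 hr with rfl | rfl | rfl | rfl
              · simp at hrne
              · have : (x+1).natAbs = x.natAbs + 1 := by omega
                unfold Dz; simp only [this]; simp only [Int.natAbs_zero, D_x0]
                exact_mod_cast (by omega : x.natAbs ≤ x.natAbs + 1)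
              · have hoy : (-1 : ℤ) % 2 = 1 := by decide
                rw [show ((x:ℤ), (0:ℤ)-1) = (x, -1) by norm_num, Dz_oddy hx hoy]
                have b1 : ((x.natAbs : ℕ):ℕ∞) ≤ Dz (x, -1-1) := by
                  refine le_trans ?_ (Dz_lb (x, -1-1))
                  exact_mod_cast (by omega : x.natAbs ≤ x.natAbs + (-1-1 : ℤ).natAbs)
                have b2 : ((x.natAbs : ℕ):ℕ∞) ≤ Dz (x, -1+1) := by
                  rw [show ((x:ℤ), (-1:ℤ)+1) = (x, 0) by norm_num, hDp]
                have : ((x.natAbs : ℕ):ℕ∞) ≤ min (Dz (x, -1-1)) (Dz (x, -1+1)) := le_min b1 b2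
                exact le_trans this (by exact le_add_self)
              · have hoy : (1 : ℤ) % 2 = 1 := by decide
                rw [show ((x:ℤ), (0:ℤ)+1) = (x, 1) by norm_num, Dz_oddy hx hoy]
                have b1 : ((x.natAbs : ℕ):ℕ∞) ≤ Dz (x, 1-1) := by
                  rw [show ((x:ℤ), (1:ℤ)-1) = (x, 0) by norm_num, hDp]
                have b2 : ((x.natAbs : ℕ):ℕ∞) ≤ Dz (x, 1+1) := by
                  refine le_trans ?_ (Dz_lb (x, 1+1))
                  exact_mod_cast (by omega : x.natAbs ≤ x.natAbs + (1+1 : ℤ).natAbs)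
                have : ((x.natAbs : ℕ):ℕ∞) ≤ min (Dz (x, 1-1)) (Dz (x, 1+1)) := le_min b1 b2
                exact le_trans this (by exact le_add_self)
        · intro hT
          rw [hDp] at hT
          exact absurd hT (ENat.coe_ne_top _)
      · -- y ≠ 0, both even
        rcases eq_or_ne x 0 with rfl | hx0
        · -- x = 0
          have hDp : Dz (0, y) = ((y.natAbs : ℕ) : ℕ∞) := by
            unfold Dz; simp [D_0y]
          constructor
          · intro k hk
            have hky : k = y.natAbs := by rw [hDp] at hk; exact_mod_cast hk.symm
            subst hky
            have hside : ∀ x' : ℤ, x' % 2 = 1 → ((y.natAbs : ℕ):ℕ∞) ≤ Dz (x', y) := by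
              intro x' hx'
              rw [Dz_oddx hx' hy]
              have b1 : ((y.natAbs : ℕ):ℕ∞) ≤ Dz (x'-1, y) := by
                refine le_trans ?_ (Dz_lb (x'-1, y))
                exact_mod_cast (by omega : y.natAbs ≤ (x'-1).natAbs + y.natAbs)
              have b2 : ((y.natAbs : ℕ):ℕ∞) ≤ Dz (x'+1, y) := by
                refine le_trans ?_ (Dz_lb (x'+1, y))
                exact_mod_cast (by omega : y.natAbs ≤ (x'+1).natAbs + y.natAbs)
              exact le_trans (le_min b1 b2) (by exact le_add_self)
            rcases lt_or_gt_of_ne hy0 with hneg | hpos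
            · refine ⟨(0, y+1), by simp [mem_vnNbrs], ?_, ?_⟩
              · have : (y+1).natAbs = y.natAbs - 1 := by omega
                unfold Dz; simp only [this]; simp [D_0y]
              · intro r hr hrne
                rcases mem_vnNbrs.1 hr with rfl | rfl | rfl | rfl
                · exact hside _ (by norm_num)
                · exact hside _ (by norm_num)
                · have : (y-1).natAbs = y.natAbs + 1 := by omega
                  unfold Dz; simp only [this]; simp only [Int.natAbs_zero, D_0y]
                  exact_mod_cast (by omega : y.natAbs ≤ y.natAbs + 1)
                · simp at hrne
            · refine ⟨(0, y-1), by simp [mem_vnNbrs], ?_, ?_⟩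
              · have : (y-1).natAbs = y.natAbs - 1 := by omega
                unfold Dz; simp only [this]; simp [D_0y]
              · intro r hr hrne
                rcases mem_vnNbrs.1 hr with rfl | rfl | rfl | rfl
                · exact hside _ (by norm_num)
                · exact hside _ (by norm_num)
                · simp at hrne
                · have : (y+1).natAbs = y.natAbs + 1 := by omega
                  unfold Dz; simp only [this]; simp only [Int.natAbs_zero, D_0y]
                  exact_mod_cast (by omega : y.natAbs ≤ y.natAbs + 1)
          · intro hT
            rw [hDp] at hT
            exact absurd hT (ENat.coe_ne_top _)
        · -- x ≠ 0, y ≠ 0, both even : halving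
          obtain ⟨x', rfl⟩ : ∃ x', x = 2*x' := ⟨x/2, by omega⟩
          obtain ⟨y', rfl⟩ : ∃ y', y = 2*y' := ⟨y/2, by omega⟩
          have hx'0 : x' ≠ 0 := by omega
          have hhalf : Dz (2*x', 2*y') = 2 * Dz (x', y') := Dz_half x' y'
          have hNlt : x'.natAbs + y'.natAbs < N := by omega
          have hp'0 : ((x':ℤ), (y':ℤ)) ≠ ((0:ℤ), (0:ℤ)) := by
            simp only [ne_eq, Prod.mk.injEq, not_and]; intro h; omega
          obtain ⟨ihM1, ihM2⟩ := ih (x'.natAbs + y'.natAbs) hNlt x' y' hp'0 rfl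
          have flank := Dz_flank x' y'
          have hmemtrans := vn_up x' y'
          have hmemback := vn_down x' y'
          constructor
          · intro k hk
            rw [hhalf] at hk
            obtain ⟨k', hk', hkk⟩ := two_mul_eq_coe hk
            have hk'1 : 1 ≤ k' := by
              have := Dz_lb ((x':ℤ), (y':ℤ))
              rw [hk'] at this
              have h2 : x'.natAbs + y'.natAbs ≤ k' := by exact_mod_cast this
              omega
            obtain ⟨q', hq'mem, hq'val, hq'uniq⟩ := ihM1 k' hk'
            refine ⟨q' + (x', y'), hmemtrans q' hq'mem, ?_, ?_⟩
            · rw [flank q' hq'mem, hq'val, hhalf, hk']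
              rw [show (2 : ℕ∞) * ((k'-1 : ℕ):ℕ∞) = ((2*(k'-1) : ℕ):ℕ∞) by push_cast; ring,
                  show (2 : ℕ∞) * ((k' : ℕ):ℕ∞) = ((2*k' : ℕ):ℕ∞) by push_cast; ring]
              rw [min_eq_left (by exact_mod_cast (by omega : 2*(k'-1) ≤ 2*k'))]
              rw [show (1:ℕ∞) + ((2*(k'-1) : ℕ):ℕ∞) = ((1+2*(k'-1) : ℕ):ℕ∞) by push_cast; ring]
              congr 1
              omega
            · intro r hr hrne
              obtain ⟨hr'mem, hr'eq⟩ := hmemback r hr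
              have hr'ne : r - ((x':ℤ), (y':ℤ)) ≠ q' := by
                intro h
                apply hrne
                rw [← hr'eq, h]
              have hge := hq'uniq _ hr'mem hr'ne
              rw [← hr'eq, flank _ hr'mem, hhalf, hk']
              have h2 : ((2*k' : ℕ):ℕ∞) ≤ 2 * Dz (r - ((x':ℤ), (y':ℤ))) := by
                rw [show ((2*k' : ℕ):ℕ∞) = 2 * ((k' : ℕ):ℕ∞) by push_cast; ring]
                exact mul_le_mul_right hge 2
              have h3 : ((2*k' : ℕ):ℕ∞) ≤ min (2 * Dz (r - ((x':ℤ), (y':ℤ)))) (2 * ((k':ℕ):ℕ∞)) := by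
                refine le_min h2 ?_
                rw [show (2 : ℕ∞) * ((k' : ℕ):ℕ∞) = ((2*k' : ℕ):ℕ∞) by push_cast; ring]
              calc ((k : ℕ):ℕ∞) = ((2*k' : ℕ):ℕ∞) := by rw [hkk]
                _ ≤ 1 + ((2*k' : ℕ):ℕ∞) := le_add_self
                _ ≤ 1 + min (2 * Dz (r - ((x':ℤ), (y':ℤ)))) (2 * ((k':ℕ):ℕ∞)) := by
                    exact add_le_add_right h3 1
          · intro hT
            rw [hhalf] at hT
            have hT' : Dz ((x':ℤ), (y':ℤ)) = ⊤ := two_mul_eq_top hT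
            rcases ihM2 hT' with hall | ⟨q', hq'mem, r', hr'mem, hqr'ne, hval_eq, hvalnetop, hmin⟩
            · left
              intro q hq
              obtain ⟨hq'mem, hq'eq⟩ := hmemback q hq
              rw [← hq'eq, flank _ hq'mem, hall _ hq'mem, hhalf, hT']
              simp [ENat.mul_top]
            · right
              obtain ⟨v, hv⟩ := enat_ne_top_iff.mp hvalnetop
              have hflankval : ∀ s' ∈ vnNbrs ((x':ℤ), (y':ℤ)),
                  Dz (s' + ((x':ℤ), (y':ℤ))) = 1 + 2 * Dz s' := by
                intro s' hs'
                rw [flank _ hs', hhalf, hT']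
                rw [ENat.mul_top (by norm_num), min_eq_left le_top]
              refine ⟨q' + (x', y'), hmemtrans _ hq'mem, r' + (x', y'), hmemtrans _ hr'mem,
                ?_, ?_, ?_, ?_⟩
              · intro h
                apply hqr'ne
                have : q' = q' + ((x':ℤ), (y':ℤ)) - ((x':ℤ), (y':ℤ)) := by simp
                rw [this, h]; simp
              · rw [hflankval _ hq'mem, hflankval _ hr'mem, hval_eq]
              · rw [hflankval _ hq'mem, hv]
                rw [show (2 : ℕ∞) * ((v : ℕ):ℕ∞) = ((2*v : ℕ):ℕ∞) by push_cast; ring,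
                    show (1:ℕ∞) + ((2*v : ℕ):ℕ∞) = ((1+2*v : ℕ):ℕ∞) by push_cast; ring]
                exact ENat.coe_ne_top _
              · intro s hs
                obtain ⟨hs'mem, hs'eq⟩ := hmemback s hs
                rw [← hs'eq, hflankval _ hs'mem, hflankval _ hq'mem]
                exact add_le_add_right (mul_le_mul_right (hmin _ hs'mem) 2) 1
    · -- x even, y odd
      have hA : Dz (x, y-1) = Dz (x, y-1) := rfl
      have hform := Dz_oddy hx hy
      have hc : Dz (x-1, y) = ⊤ := Dz_oddodd (by omega) hy
      have hd : Dz (x+1, y) = ⊤ := Dz_oddodd (by omega) hy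
      constructor
      · intro k hk
        rw [hform] at hk
        obtain ⟨j, hj, hkj⟩ := one_add_eq_coe hk
        rcases min_cases' (Dz (x, y-1)) (Dz (x, y+1)) with hm | hm
        · have hAj : Dz (x, y-1) = (j:ℕ∞) := by rw [hm] at hj; exact hj
          have hle : Dz (x, y-1) ≤ Dz (x, y+1) := hm ▸ min_le_right _ _
          have hne : Dz (x, y-1) ≠ Dz (x, y+1) := by
            intro he
            have h2 := Dz_flank_ne' hx hy he
            rw [hAj] at h2
            exact absurd h2 (ENat.coe_ne_top j)
          have hlt : Dz (x, y-1) < Dz (x, y+1) := lt_of_le_of_ne hle hne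
          refine ⟨(x, y-1), by simp [mem_vnNbrs], by rw [hAj]; congr 1; omega, ?_⟩
          intro r hr hrne
          rcases mem_vnNbrs.1 hr with rfl | rfl | rfl | rfl
          · rw [hc]; exact le_top
          · rw [hd]; exact le_top
          · simp at hrne
          · have := enat_add_one_le (hAj ▸ hlt)
            refine le_trans ?_ this
            exact_mod_cast (by omega : k ≤ j+1)
        · have hAj : Dz (x, y+1) = (j:ℕ∞) := by rw [hm] at hj; exact hj
          have hle : Dz (x, y+1) ≤ Dz (x, y-1) := hm ▸ min_le_left _ _
          have hne : Dz (x, y-1) ≠ Dz (x, y+1) := by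
            intro he
            have h2 := Dz_flank_ne' hx hy he
            rw [he, hAj] at h2
            exact absurd h2 (ENat.coe_ne_top j)
          have hlt : Dz (x, y+1) < Dz (x, y-1) := lt_of_le_of_ne hle (Ne.symm hne)
          refine ⟨(x, y+1), by simp [mem_vnNbrs], by rw [hAj]; congr 1; omega, ?_⟩
          intro r hr hrne
          rcases mem_vnNbrs.1 hr with rfl | rfl | rfl | rfl
          · rw [hc]; exact le_top
          · rw [hd]; exact le_top
          · have := enat_add_one_le (hAj ▸ hlt)
            refine le_trans ?_ this
            exact_mod_cast (by omega : k ≤ j+1)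
          · simp at hrne
      · intro hT
        rw [hform] at hT
        have hmin := one_add_eq_top hT
        have hboth := min_eq_top.mp hmin
        left
        intro q hq
        rcases mem_vnNbrs.1 hq with rfl | rfl | rfl | rfl
        · exact hc
        · exact hd
        · exact hboth.1
        · exact hboth.2
    · -- x odd, y even
      have hform := Dz_oddx hx hy
      have hc : Dz (x, y-1) = ⊤ := Dz_oddodd hx (by omega)
      have hd : Dz (x, y+1) = ⊤ := Dz_oddodd hx (by omega)
      constructor
      · intro k hk
        rw [hform] at hk
        obtain ⟨j, hj, hkj⟩ := one_add_eq_coe hk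
        rcases min_cases' (Dz (x-1, y)) (Dz (x+1, y)) with hm | hm
        · have hAj : Dz (x-1, y) = (j:ℕ∞) := by rw [hm] at hj; exact hj
          have hle : Dz (x-1, y) ≤ Dz (x+1, y) := hm ▸ min_le_right _ _
          have hne : Dz (x-1, y) ≠ Dz (x+1, y) := by
            intro he
            have h2 := Dz_flank_ne hx hy he
            rw [hAj] at h2
            exact absurd h2 (ENat.coe_ne_top j)
          have hlt : Dz (x-1, y) < Dz (x+1, y) := lt_of_le_of_ne hle hne
          refine ⟨(x-1, y), by simp [mem_vnNbrs], by rw [hAj]; congr 1; omega, ?_⟩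
          intro r hr hrne
          rcases mem_vnNbrs.1 hr with rfl | rfl | rfl | rfl
          · simp at hrne
          · have := enat_add_one_le (hAj ▸ hlt)
            refine le_trans ?_ this
            exact_mod_cast (by omega : k ≤ j+1)
          · rw [hc]; exact le_top
          · rw [hd]; exact le_top
        · have hAj : Dz (x+1, y) = (j:ℕ∞) := by rw [hm] at hj; exact hj
          have hle : Dz (x+1, y) ≤ Dz (x-1, y) := hm ▸ min_le_left _ _
          have hne : Dz (x-1, y) ≠ Dz (x+1, y) := by
            intro he
            have h2 := Dz_flank_ne hx hy he
            rw [he, hAj] at h2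
            exact absurd h2 (ENat.coe_ne_top j)
          have hlt : Dz (x+1, y) < Dz (x-1, y) := lt_of_le_of_ne hle (Ne.symm hne)
          refine ⟨(x+1, y), by simp [mem_vnNbrs], by rw [hAj]; congr 1; omega, ?_⟩
          intro r hr hrne
          rcases mem_vnNbrs.1 hr with rfl | rfl | rfl | rfl
          · have := enat_add_one_le (hAj ▸ hlt)
            refine le_trans ?_ this
            exact_mod_cast (by omega : k ≤ j+1)
          · simp at hrne
          · rw [hc]; exact le_top
          · rw [hd]; exact le_top
      · intro hT
        rw [hform] at hT
        have hmin := one_add_eq_top hT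
        have hboth := min_eq_top.mp hmin
        left
        intro q hq
        rcases mem_vnNbrs.1 hq with rfl | rfl | rfl | rfl
        · exact hboth.1
        · exact hboth.2
        · exact hc
        · exact hd
    · -- both odd
      have hTp : Dz (x, y) = ⊤ := Dz_oddodd hx hy
      constructor
      · intro k hk
        rw [hTp] at hk
        exact absurd hk.symm (ENat.coe_ne_top _)
      · intro _
        have na : Dz (x-1, y) = 1 + min (Dz (x-1, y-1)) (Dz (x-1, y+1)) :=
          Dz_oddy (by omega) hy
        have nb : Dz (x+1, y) = 1 + min (Dz (x+1, y-1)) (Dz (x+1, y+1)) :=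
          Dz_oddy (by omega) hy
        have nc : Dz (x, y-1) = 1 + min (Dz (x-1, y-1)) (Dz (x+1, y-1)) := by
          have h := Dz_oddx hx (by omega : (y-1) % 2 = 0)
          rw [show ((x:ℤ), y-1).1 - 1 = x - 1 from rfl] at h
          exact h
        have nd : Dz (x, y+1) = 1 + min (Dz (x-1, y+1)) (Dz (x+1, y+1)) :=
          Dz_oddx hx (by omega : (y+1) % 2 = 0)
        by_cases hall : Dz (x-1,y-1) = ⊤ ∧ Dz (x+1,y-1) = ⊤ ∧ Dz (x-1,y+1) = ⊤ ∧ Dz (x+1,y+1) = ⊤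
        · left
          intro q hq
          obtain ⟨h1, h2, h3, h4⟩ := hall
          rcases mem_vnNbrs.1 hq with rfl | rfl | rfl | rfl
          · rw [na, h1, h3]; simp
          · rw [nb, h2, h4]; simp
          · rw [nc, h1, h2]; simp
          · rw [nd, h3, h4]; simp
        · right
          set P := Dz (x-1,y-1) with hPdef
          set Q := Dz (x+1,y-1) with hQdef
          set R := Dz (x-1,y+1) with hRdef
          set S := Dz (x+1,y+1) with hSdef
          set m := min (min P Q) (min R S) with hmdef
          have hmP : m ≤ P := (min_le_left _ _).trans (min_le_left _ _)
          have hmQ : m ≤ Q := (min_le_left _ _).trans (min_le_right _ _)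
          have hmR : m ≤ R := (min_le_right _ _).trans (min_le_left _ _)
          have hmS : m ≤ S := (min_le_right _ _).trans (min_le_right _ _)
          have hmT : m ≠ ⊤ := by
            intro hmt
            rcases min_eq_top.mp hmt with ⟨h12, h34⟩
            rcases min_eq_top.mp h12 with ⟨hP, hQ⟩
            rcases min_eq_top.mp h34 with ⟨hR, hS⟩
            exact hall ⟨hP, hQ, hR, hS⟩
          have hge : ∀ s ∈ vnNbrs (x, y), 1 + m ≤ Dz s := by
            intro s hs
            rcases mem_vnNbrs.1 hs with rfl | rfl | rfl | rfl
            · rw [na]; exact add_le_add_right (le_min hmP hmR) 1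
            · rw [nb]; exact add_le_add_right (le_min hmQ hmS) 1
            · rw [nc]; exact add_le_add_right (le_min hmP hmQ) 1
            · rw [nd]; exact add_le_add_right (le_min hmR hmS) 1
          obtain ⟨v, hv⟩ := enat_ne_top_iff.mp hmT
          have hnetop : (1 : ℕ∞) + m ≠ ⊤ := by
            rw [hv, show (1:ℕ∞) + (v:ℕ∞) = ((1+v : ℕ):ℕ∞) by push_cast; ring]
            exact ENat.coe_ne_top _
          have hcase : m = P ∨ m = Q ∨ m = R ∨ m = S := by
            rcases min_cases' (min P Q) (min R S) with h1 | h1 <;>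
              rw [hmdef, h1]
            · rcases min_cases' P Q with h2 | h2 <;> rw [h2]
              · exact Or.inl rfl
              · exact Or.inr (Or.inl rfl)
            · rcases min_cases' R S with h2 | h2 <;> rw [h2]
              · exact Or.inr (Or.inr (Or.inl rfl))
              · exact Or.inr (Or.inr (Or.inr rfl))
          rcases hcase with hm | hm | hm | hm
          · refine ⟨(x-1, y), by simp [mem_vnNbrs], (x, y-1), by simp [mem_vnNbrs],
              by simp only [ne_eq, Prod.mk.injEq, not_and]; intro h; omega, ?_, ?_, ?_⟩
            · rw [na, nc, min_eq_left (hm.symm.trans_le hmR), min_eq_left (hm.symm.trans_le hmQ)]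
            · rw [na, min_eq_left (hm.symm.trans_le hmR), ← hm]; exact hnetop
            · intro s hs
              rw [na, min_eq_left (hm.symm.trans_le hmR), ← hm]; exact hge s hs
          · refine ⟨(x+1, y), by simp [mem_vnNbrs], (x, y-1), by simp [mem_vnNbrs],
              by simp only [ne_eq, Prod.mk.injEq, not_and]; intro h; omega, ?_, ?_, ?_⟩
            · rw [nb, nc, min_eq_left (hm.symm.trans_le hmS), min_eq_right (hm.symm.trans_le hmP)]
            · rw [nb, min_eq_left (hm.symm.trans_le hmS), ← hm]; exact hnetop
            · intro s hs
              rw [nb, min_eq_left (hm.symm.trans_le hmS), ← hm]; exact hge s hs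
          · refine ⟨(x-1, y), by simp [mem_vnNbrs], (x, y+1), by simp [mem_vnNbrs],
              by simp only [ne_eq, Prod.mk.injEq, not_and]; intro h; omega, ?_, ?_, ?_⟩
            · rw [na, nd, min_eq_right (hm.symm.trans_le hmP), min_eq_left (hm.symm.trans_le hmS)]
            · rw [na, min_eq_right (hm.symm.trans_le hmP), ← hm]; exact hnetop
            · intro s hs
              rw [na, min_eq_right (hm.symm.trans_le hmP), ← hm]; exact hge s hs
          · refine ⟨(x+1, y), by simp [mem_vnNbrs], (x, y+1), by simp [mem_vnNbrs],
              by simp only [ne_eq, Prod.mk.injEq, not_and]; intro h; omega, ?_, ?_, ?_⟩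
            · rw [nb, nd, min_eq_right (hm.symm.trans_le hmQ), min_eq_right (hm.symm.trans_le hmR)]
            · rw [nb, min_eq_right (hm.symm.trans_le hmQ), ← hm]; exact hnetop
            · intro s hs
              rw [nb, min_eq_right (hm.symm.trans_le hmQ), ← hm]; exact hge s hs

open Finset in
noncomputable def boxF (m : ℕ) : Finset (ℤ × ℤ) := Finset.Icc (-(m:ℤ)) m ×ˢ Finset.Icc (-(m:ℤ)) m

noncomputable def genLe (n : ℕ) : Finset (ℤ × ℤ) :=
  (boxF n).filter (fun p => Dz p < (n:ℕ∞))

noncomputable def genE (m : ℕ) : Finset (ℤ × ℤ) :=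
  (boxF (m+1)).filter (fun p => Dz p = (m:ℕ∞))

lemma mem_boxF {p : ℤ × ℤ} {m : ℕ} (h : p.1.natAbs + p.2.natAbs ≤ m) : p ∈ boxF m := by
  simp only [boxF, Finset.mem_product, Finset.mem_Icc]
  omega

lemma mem_genLe {p : ℤ × ℤ} {n : ℕ} : p ∈ genLe n ↔ Dz p < (n:ℕ∞) := by
  constructor
  · intro h; exact (Finset.mem_filter.mp h).2
  · intro h
    refine Finset.mem_filter.mpr ⟨mem_boxF ?_, h⟩
    have hlb := Dz_lb p
    have := lt_of_le_of_lt hlb h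
    exact_mod_cast le_of_lt (by exact_mod_cast this)

lemma mem_genE {p : ℤ × ℤ} {m : ℕ} : p ∈ genE m ↔ Dz p = (m:ℕ∞) := by
  constructor
  · intro h; exact (Finset.mem_filter.mp h).2
  · intro h
    refine Finset.mem_filter.mpr ⟨mem_boxF ?_, h⟩
    have hlb := Dz_lb p
    rw [h] at hlb
    have : p.1.natAbs + p.2.natAbs ≤ m := by exact_mod_cast hlb
    omega

lemma enat_lt_split {t : ℕ∞} {n : ℕ} (hn : 1 ≤ n) :
    t < (n:ℕ∞) ↔ t < ((n-1 : ℕ):ℕ∞) ∨ t = ((n-1 : ℕ):ℕ∞) := by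
  induction t using ENat.recTopCoe with
  | top =>
    constructor
    · intro h; exact absurd h (by simp)
    · intro h
      rcases h with h | h
      · exact absurd h (by simp)
      · exact absurd h.symm (ENat.coe_ne_top _)
  | coe j =>
    constructor
    · intro h
      have hj : j < n := by exact_mod_cast h
      rcases lt_or_eq_of_le (by omega : j ≤ n-1) with h' | h'
      · exact Or.inl (by exact_mod_cast h')
      · exact Or.inr (by exact_mod_cast h')
    · intro h
      rcases h with h | h
      · have hj : j < n - 1 := by exact_mod_cast h
        exact_mod_cast (by omega : j < n)
      · have hj : j = n - 1 := by exact_mod_cast h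
        exact_mod_cast (by omega : j < n)

lemma enat_not_top_of_lt {t : ℕ∞} {n : ℕ} (h : t < (n:ℕ∞)) : t ≠ ⊤ :=
  fun ht => absurd (ht ▸ h) (by simp)

lemma vn_inter (p : ℤ × ℤ) (n : ℕ) :
    vnNbrs p ∩ genLe n = (vnNbrs p).filter (fun q => Dz q < (n:ℕ∞)) := by
  ext q
  simp only [Finset.mem_inter, Finset.mem_filter, mem_genLe]

lemma gen_step {n : ℕ} (hn : 1 ≤ n) (p : ℤ × ℤ) :
    Dz p < ((n+1 : ℕ):ℕ∞) ↔
      Dz p < (n:ℕ∞) ∨ (¬ Dz p < (n:ℕ∞) ∧ (vnNbrs p ∩ genLe n).card = 1) := by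
  rw [vn_inter]
  by_cases hp0 : p = ((0:ℤ), (0:ℤ))
  · subst hp0
    rw [Dz_zero]
    constructor
    · intro _
      left; exact_mod_cast (by omega : 0 < n)
    · intro _
      exact_mod_cast (by omega : 0 < n+1)
  · have hp0' : (p.1, p.2) ≠ ((0:ℤ), (0:ℤ)) := by
      intro h; exact hp0 (by rw [← h])
    obtain ⟨hM1, hM2⟩ := master (p.1.natAbs + p.2.natAbs) p.1 p.2 hp0' rfl
    have hpp : (p.1, p.2) = p := rfl
    rw [hpp] at hM1 hM2
    constructor
    · intro h
      by_cases hlt : Dz p < (n:ℕ∞)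
      · exact Or.inl hlt
      · right
        refine ⟨hlt, ?_⟩
        obtain ⟨j, hj⟩ := enat_ne_top_iff.mp (enat_not_top_of_lt h)
        have hjn : j = n := by
          rw [hj] at h hlt
          have h1 : j < n+1 := by exact_mod_cast h
          have h2 : ¬ j < n := fun hh => hlt (by exact_mod_cast hh)
          omega
        subst hjn
        obtain ⟨q, hqmem, hqval, hquniq⟩ := hM1 j hj
        have hfilter : (vnNbrs p).filter (fun q => Dz q < (j:ℕ∞)) = {q} := by
          ext r
          simp only [Finset.mem_filter, Finset.mem_singleton]
          constructor
          · rintro ⟨hrmem, hrlt⟩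
            by_contra hrq
            have := hquniq r hrmem hrq
            exact absurd (lt_of_le_of_lt this hrlt) (lt_irrefl _)
          · rintro rfl
            refine ⟨hqmem, ?_⟩
            rw [hqval]
            exact_mod_cast (by omega : j - 1 < j)
        rw [hfilter, Finset.card_singleton]
    · intro h
      rcases h with h | ⟨hnlt, hcard⟩
      · exact lt_of_lt_of_le h (by exact_mod_cast (by omega : n ≤ n+1))
      · by_contra hge
        rcases eq_or_ne (Dz p) ⊤ with hT | hT
        · rcases hM2 hT with hall | ⟨q, hqmem, r, hrmem, hqr, hval, hvtop, hmin⟩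
          · have : (vnNbrs p).filter (fun q => Dz q < (n:ℕ∞)) = ∅ := by
              ext r
              simp only [Finset.mem_filter, Finset.notMem_empty, iff_false, not_and]
              intro hrmem hrlt
              rw [hall r hrmem] at hrlt
              simp at hrlt
            rw [this] at hcard
            simp at hcard
          · by_cases hqlt : Dz q < (n:ℕ∞)
            · have hsub : ({q, r} : Finset (ℤ × ℤ)) ⊆ (vnNbrs p).filter (fun s => Dz s < (n:ℕ∞)) := by
                intro s hs
                simp only [Finset.mem_insert, Finset.mem_singleton] at hs
                rcases hs with rfl | rfl
                · exact Finset.mem_filter.mpr ⟨hqmem, hqlt⟩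
                · exact Finset.mem_filter.mpr ⟨hrmem, by rw [hval]; exact hqlt⟩
              have h2 : ({q, r} : Finset (ℤ × ℤ)).card = 2 := by
                rw [Finset.card_insert_of_notMem (by simp [hqr]), Finset.card_singleton]
              have := Finset.card_le_card hsub
              rw [h2, hcard] at this
              omega
            · have : (vnNbrs p).filter (fun s => Dz s < (n:ℕ∞)) = ∅ := by
                ext s
                simp only [Finset.mem_filter, Finset.notMem_empty, iff_false, not_and]
                intro hsmem hslt
                exact hqlt (lt_of_le_of_lt (hmin s hsmem) hslt)
              rw [this] at hcard
              simp at hcard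
        · obtain ⟨k, hk⟩ := enat_ne_top_iff.mp hT
          have hkn : n + 1 ≤ k := by
            rw [hk] at hge
            by_contra hh
            exact hge (by exact_mod_cast (by omega : k < n+1))
          obtain ⟨q, hqmem, hqval, hquniq⟩ := hM1 k hk
          have : (vnNbrs p).filter (fun s => Dz s < (n:ℕ∞)) = ∅ := by
            ext s
            simp only [Finset.mem_filter, Finset.notMem_empty, iff_false, not_and]
            intro hsmem hslt
            by_cases hsq : s = q
            · subst hsq
              rw [hqval] at hslt
              have : k - 1 < n := by exact_mod_cast hslt
              omega
            · have := hquniq s hsmem hsq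
              have h2 : ((k:ℕ):ℕ∞) < (n:ℕ∞) := lt_of_le_of_lt this hslt
              have : k < n := by exact_mod_cast h2
              omega
          rw [this] at hcard
          simp at hcard

lemma Dz_unit1 : Dz (1, 0) = 1 := by unfold Dz; simp [D_x0]
lemma Dz_unit2 : Dz (-1, 0) = 1 := by unfold Dz; simp [D_x0]
lemma Dz_unit3 : Dz (0, 1) = 1 := by unfold Dz; simp [D_0y]
lemma Dz_unit4 : Dz (0, -1) = 1 := by unfold Dz; simp [D_0y]

lemma genE_one : genE 1 = {((1:ℤ), (0:ℤ)), (-1, 0), (0, 1), (0, -1)} := by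
  ext p
  rw [mem_genE]
  constructor
  · intro h
    have hlb := Dz_lb p
    rw [h] at hlb
    have hsum : p.1.natAbs + p.2.natAbs ≤ 1 := by exact_mod_cast hlb
    have hne : p ≠ ((0:ℤ), (0:ℤ)) := by
      intro h0
      rw [h0, Dz_zero] at h
      exact absurd h.symm (by exact_mod_cast (by omega : (1:ℕ) ≠ 0))
    have hcases : (p.1 = 1 ∧ p.2 = 0) ∨ (p.1 = -1 ∧ p.2 = 0) ∨ (p.1 = 0 ∧ p.2 = 1) ∨ (p.1 = 0 ∧ p.2 = -1) := by
      have : ¬(p.1 = 0 ∧ p.2 = 0) := fun hh => hne (Prod.ext hh.1 hh.2)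
      omega
    obtain ⟨p1, p2⟩ := p
    simp only [Finset.mem_insert, Finset.mem_singleton, Prod.mk.injEq]
    simp only at hcases
    tauto
  · intro h
    simp only [Finset.mem_insert, Finset.mem_singleton] at h
    rcases h with rfl | rfl | rfl | rfl
    · exact Dz_unit1
    · exact Dz_unit2
    · exact Dz_unit3
    · exact Dz_unit4

lemma card_genE_one : (genE 1).card = 4 := by
  rw [genE_one]
  rw [Finset.card_insert_of_notMem (by simp), Finset.card_insert_of_notMem (by simp),
      Finset.card_insert_of_notMem (by simp), Finset.card_singleton]

lemma card_genE_even {m : ℕ} (hm : 1 ≤ m) (hme : m % 2 = 0) :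
    (genE m).card = (genE (m/2)).card := by
  symm
  apply Finset.card_bij (fun a _ => a + a)
  · intro a ha
    rw [mem_genE] at ha ⊢
    have : a + a = ((2*a.1 : ℤ), (2*a.2 : ℤ)) := by
      simp only [Prod.ext_iff]; constructor <;> simp <;> ring
    rw [this, Dz_half, ha]
    rw [show (2:ℕ∞) * ((m/2 : ℕ):ℕ∞) = ((2*(m/2) : ℕ):ℕ∞) by push_cast; ring]
    congr 1
    omega
  · intro a _ b _ hab
    have h1 : a.1 + a.1 = b.1 + b.1 := congrArg Prod.fst hab
    have h2 : a.2 + a.2 = b.2 + b.2 := congrArg Prod.snd hab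
    exact Prod.ext (by omega) (by omega)
  · intro b hb
    rw [mem_genE] at hb
    have hpar := Dz_parity hb
    have hx2 : b.1 % 2 = 0 ∨ b.1 % 2 = 1 := by omega
    have hy2 : b.2 % 2 = 0 ∨ b.2 % 2 = 1 := by omega
    rcases hx2 with hx | hx <;> rcases hy2 with hy | hy
    · refine ⟨(b.1/2, b.2/2), ?_, ?_⟩
      · rw [mem_genE]
        have hb' : b = ((2*(b.1/2) : ℤ), (2*(b.2/2) : ℤ)) := by
          simp only [Prod.ext_iff]; constructor <;> omega
        rw [hb', Dz_half] at hb
        obtain ⟨j, hj, hmj⟩ := two_mul_eq_coe hb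
        rw [hj]
        congr 1
        omega
      · simp only [Prod.ext_iff]; constructor <;> simp <;> omega
    · exfalso; omega
    · exfalso; omega
    · exfalso
      rw [Dz_oddodd hx hy] at hb
      exact absurd hb.symm (ENat.coe_ne_top _)

lemma card_genE_odd {m : ℕ} (hm : 3 ≤ m) (hmo : m % 2 = 1) :
    (genE m).card = 3 * (genE (m-1)).card := by
  classical
  set π : ℤ × ℤ → ℤ × ℤ := fun p =>
    if p.1 % 2 = 1 then
      (if Dz (p.1 - 1, p.2) = ((m-1 : ℕ):ℕ∞) then (p.1-1, p.2) else (p.1+1, p.2))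
    else
      (if Dz (p.1, p.2-1) = ((m-1 : ℕ):ℕ∞) then (p.1, p.2-1) else (p.1, p.2+1)) with hπ
  have hπnbr : ∀ p, π p ∈ vnNbrs p := by
    intro p
    rw [hπ]
    simp only
    split_ifs <;> simp [mem_vnNbrs]
  have HF : ∀ p ∈ genE m, π p ∈ genE (m-1) := by
    intro p hp
    rw [mem_genE] at hp
    have hpar := Dz_parity hp
    have hx2 : p.1 % 2 = 0 ∨ p.1 % 2 = 1 := by omega
    rcases hx2 with hx | hx
    · -- p.1 even, so p.2 odd
      have hy : p.2 % 2 = 1 := by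
        rcases (by omega : p.2 % 2 = 0 ∨ p.2 % 2 = 1) with hy | hy
        · exfalso; omega
        · exact hy
      have hform : Dz (p.1, p.2) = 1 + min (Dz (p.1, p.2-1)) (Dz (p.1, p.2+1)) :=
        Dz_oddy hx hy
      rw [show ((p.1 : ℤ), (p.2 : ℤ)) = p from rfl] at hform
      rw [hform] at hp
      obtain ⟨j, hj, hmj⟩ := one_add_eq_coe hp
      have hjm : j = m - 1 := by omega
      subst hjm
      rw [hπ]
      simp only [if_neg (by omega : ¬ p.1 % 2 = 1)]
      by_cases hcond : Dz (p.1, p.2-1) = ((m-1 : ℕ):ℕ∞)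
      · rw [if_pos hcond, mem_genE]; exact hcond
      · rw [if_neg hcond, mem_genE]
        rcases min_cases' (Dz (p.1, p.2-1)) (Dz (p.1, p.2+1)) with hmm | hmm
        · exact absurd (by rw [← hmm]; exact hj) hcond
        · rw [← hmm]; exact hj
    · -- p.1 odd, p.2 even
      have hy : p.2 % 2 = 0 := by
        rcases (by omega : p.2 % 2 = 0 ∨ p.2 % 2 = 1) with hy | hy
        · exact hy
        · exfalso; omega
      have hform : Dz (p.1, p.2) = 1 + min (Dz (p.1-1, p.2)) (Dz (p.1+1, p.2)) :=
        Dz_oddx hx hy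
      rw [show ((p.1 : ℤ), (p.2 : ℤ)) = p from rfl] at hform
      rw [hform] at hp
      obtain ⟨j, hj, hmj⟩ := one_add_eq_coe hp
      have hjm : j = m - 1 := by omega
      subst hjm
      rw [hπ]
      simp only [if_pos hx]
      by_cases hcond : Dz (p.1 - 1, p.2) = ((m-1 : ℕ):ℕ∞)
      · rw [if_pos hcond, mem_genE]; exact hcond
      · rw [if_neg hcond, mem_genE]
        rcases min_cases' (Dz (p.1-1, p.2)) (Dz (p.1+1, p.2)) with hmm | hmm
        · exact absurd (by rw [← hmm]; exact hj) hcond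
        · rw [← hmm]; exact hj
  rw [Finset.card_eq_sum_card_fiberwise HF]
  have H3 : ∀ c ∈ genE (m-1), ((genE m).filter (fun p => π p = c)).card = 3 := by
    intro c hc
    rw [mem_genE] at hc
    have hc0 : c ≠ ((0:ℤ), (0:ℤ)) := by
      intro h
      rw [h, Dz_zero] at hc
      exact absurd hc.symm (by exact_mod_cast (by omega : m - 1 ≠ 0))
    have hpar := Dz_parity hc
    have hbothodd : ¬ (c.1 % 2 = 1 ∧ c.2 % 2 = 1) := by
      rintro ⟨hx, hy⟩
      have := Dz_oddodd hx hy
      rw [show ((c.1 : ℤ), (c.2 : ℤ)) = c from rfl] at this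
      rw [this] at hc
      exact absurd hc.symm (ENat.coe_ne_top _)
    have hxe : c.1 % 2 = 0 ∧ c.2 % 2 = 0 := by omega
    obtain ⟨cx, hcx⟩ : ∃ cx, c.1 = 2*cx := ⟨c.1/2, by omega⟩
    obtain ⟨cy, hcy⟩ : ∃ cy, c.2 = 2*cy := ⟨c.2/2, by omega⟩
    have hcpair : c = ((2*cx : ℤ), (2*cy : ℤ)) := by
      rw [Prod.ext_iff]; exact ⟨hcx, hcy⟩
    set k' : ℕ := (m-1)/2 with hk'def
    have h2k' : 2 * k' = m - 1 := by omega
    have hck' : Dz (cx, cy) = (k' : ℕ∞) := by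
      rw [hcpair, Dz_half] at hc
      obtain ⟨j, hj, hmj⟩ := two_mul_eq_coe hc
      rw [hj]; congr 1; omega
    have hc'0 : ((cx:ℤ), (cy:ℤ)) ≠ ((0:ℤ), (0:ℤ)) := by
      intro h
      apply hc0
      rw [hcpair]
      simp only [Prod.mk.injEq] at h ⊢
      omega
    obtain ⟨hM1, _⟩ := master (cx.natAbs + cy.natAbs) cx cy hc'0 rfl
    have hk'1 : 1 ≤ k' := by
      have hlb := Dz_lb ((cx:ℤ), (cy:ℤ))
      rw [hck'] at hlb
      have : cx.natAbs + cy.natAbs ≤ k' := by exact_mod_cast hlb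
      simp only [ne_eq, Prod.mk.injEq] at hc'0
      omega
    obtain ⟨q0, hq0mem, hq0val, hq0uniq⟩ := hM1 k' hck'
    have hq0c_mem : q0 + ((cx:ℤ), (cy:ℤ)) ∈ vnNbrs c := by
      rw [hcpair]; exact vn_up cx cy q0 hq0mem
    have hq0c_val : Dz (q0 + ((cx:ℤ), (cy:ℤ))) = ((m-2 : ℕ):ℕ∞) := by
      rw [Dz_flank cx cy q0 hq0mem, hq0val, ← hcpair, hc]
      rw [show (2:ℕ∞) * ((k'-1 : ℕ):ℕ∞) = ((2*(k'-1) : ℕ):ℕ∞) by push_cast; ring]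
      rw [min_eq_left (by exact_mod_cast (by omega : 2*(k'-1) ≤ m-1))]
      rw [show (1:ℕ∞) + ((2*(k'-1) : ℕ):ℕ∞) = ((1+2*(k'-1) : ℕ):ℕ∞) by push_cast; ring]
      congr 1
      omega
    have hparity_blocker : ∀ d e : ℤ, (d.natAbs + e.natAbs) % 2 ≠ (cx.natAbs + cy.natAbs) % 2 →
        Dz (d, e) ≠ (k' : ℕ∞) := by
      intro d e hpar2 hval
      have h1 := Dz_parity hval
      have h2 := Dz_parity hck'
      simp only at h1 h2
      omega
    have hclaim : (genE m).filter (fun p => π p = c) = (vnNbrs c).erase (q0 + ((cx:ℤ), (cy:ℤ))) := by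
      ext p
      rw [Finset.mem_filter, Finset.mem_erase]
      constructor
      · rintro ⟨hpmem, hpπ⟩
        rw [mem_genE] at hpmem
        constructor
        · intro hpq
          rw [← hpq] at hq0c_val
          rw [hpmem] at hq0c_val
          have : m = m - 2 := by exact_mod_cast hq0c_val
          omega
        · exact vnNbrs_symm (hpπ ▸ hπnbr p)
      · rintro ⟨hpq, hpmem⟩
        have hs'mem : p - ((cx:ℤ), (cy:ℤ)) ∈ vnNbrs ((cx:ℤ), (cy:ℤ)) := by
          have := vn_down cx cy p (by rw [← hcpair]; exact hpmem)
          exact this.1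
        have hs'eq : p - ((cx:ℤ), (cy:ℤ)) + ((cx:ℤ), (cy:ℤ)) = p := by
          have := vn_down cx cy p (by rw [← hcpair]; exact hpmem)
          exact this.2
        have hs'ne : p - ((cx:ℤ), (cy:ℤ)) ≠ q0 := by
          intro h
          apply hpq
          rw [← hs'eq, h]
        have hge := hq0uniq _ hs'mem hs'ne
        have hDp : Dz p = (m : ℕ∞) := by
          rw [← hs'eq, Dz_flank cx cy _ hs'mem, ← hcpair, hc]
          have h2 : ((m-1 : ℕ):ℕ∞) ≤ 2 * Dz (p - ((cx:ℤ), (cy:ℤ))) := by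
            calc ((m-1 : ℕ):ℕ∞) = 2 * ((k' : ℕ):ℕ∞) := by
                  rw [show (2:ℕ∞) * ((k' : ℕ):ℕ∞) = ((2*k' : ℕ):ℕ∞) by push_cast; ring]
                  exact_mod_cast (by omega : m - 1 = 2 * k')
              _ ≤ _ := mul_le_mul_right hge 2
          rw [min_eq_right h2]
          rw [show (1:ℕ∞) + ((m-1 : ℕ):ℕ∞) = ((1+(m-1) : ℕ):ℕ∞) by push_cast; ring]
          congr 1
          omega
        refine ⟨mem_genE.mpr hDp, ?_⟩
        -- π p = c
        rcases mem_vnNbrs.1 hpmem with rfl | rfl | rfl | rfl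
        · -- p = (c.1 - 1, c.2)
          rw [hπ]
          simp only [if_pos (by omega : (c.1 - 1) % 2 = 1)]
          have hcond : ¬ Dz (c.1 - 1 - 1, c.2) = ((m-1 : ℕ):ℕ∞) := by
            rw [show ((c.1 - 1 - 1 : ℤ), (c.2:ℤ)) = ((2*(cx-1) : ℤ), (2*cy : ℤ)) by
                  rw [Prod.ext_iff]; constructor
                  · simp only; omega
                  · simp only; omega,
                Dz_half]
            intro hv
            obtain ⟨j, hj, hmj⟩ := two_mul_eq_coe hv
            have hjk : j = k' := by omega
            subst hjk
            exact hparity_blocker (cx-1) cy (by omega) hj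
          rw [if_neg hcond]
          rw [Prod.ext_iff]
          constructor
          · simp only; ring
          · rfl
        · -- p = (c.1 + 1, c.2)
          rw [hπ]
          simp only [if_pos (by omega : (c.1 + 1) % 2 = 1)]
          have hcond : Dz (c.1 + 1 - 1, c.2) = ((m-1 : ℕ):ℕ∞) := by
            rw [show ((c.1 + 1 - 1 : ℤ), (c.2:ℤ)) = c by
                  rw [Prod.ext_iff]; constructor
                  · simp only; ring
                  · rfl]
            exact hc
          rw [if_pos hcond]
          rw [Prod.ext_iff]
          constructor
          · simp only; ring
          · rfl
        · -- p = (c.1, c.2 - 1)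
          rw [hπ]
          simp only [if_neg (by omega : ¬ (c.1 % 2 = 1))]
          have hcond : ¬ Dz (c.1, c.2 - 1 - 1) = ((m-1 : ℕ):ℕ∞) := by
            rw [show ((c.1 : ℤ), (c.2 - 1 - 1 :ℤ)) = ((2*cx : ℤ), (2*(cy-1) : ℤ)) by
                  rw [Prod.ext_iff]; constructor
                  · simp only; omega
                  · simp only; omega,
                Dz_half]
            intro hv
            obtain ⟨j, hj, hmj⟩ := two_mul_eq_coe hv
            have hjk : j = k' := by omega
            subst hjk
            exact hparity_blocker cx (cy-1) (by omega) hj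
          rw [if_neg hcond]
          rw [Prod.ext_iff]
          constructor
          · rfl
          · simp only; ring
        · -- p = (c.1, c.2 + 1)
          rw [hπ]
          simp only [if_neg (by omega : ¬ (c.1 % 2 = 1))]
          have hcond : Dz (c.1, c.2 + 1 - 1) = ((m-1 : ℕ):ℕ∞) := by
            rw [show ((c.1 : ℤ), (c.2 + 1 - 1 :ℤ)) = c by
                  rw [Prod.ext_iff]; constructor
                  · rfl
                  · simp only; ring]
            exact hc
          rw [if_pos hcond]
          rw [Prod.ext_iff]
          constructor
          · rfl
          · simp only; ring
    rw [hclaim, Finset.card_erase_of_mem hq0c_mem, card_vnNbrs]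
  rw [Finset.sum_congr rfl H3, Finset.sum_const, smul_eq_mul, mul_comm]


lemma wt_zero : wt 0 = 0 := by simp [wt]

lemma wt_def {n : ℕ} (h : n ≠ 0) : wt n = n % 2 + wt (n/2) := by
  unfold wt
  rw [Nat.digits_def' (by norm_num : 1 < 2) (Nat.pos_of_ne_zero h)]
  simp

lemma wt_pos : ∀ n, 1 ≤ n → 1 ≤ wt n := by
  intro n
  induction n using Nat.strong_induction_on with
  | _ n ih =>
    intro hn
    rw [wt_def (by omega)]
    rcases (by omega : n % 2 = 1 ∨ n % 2 = 0) with h | h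
    · omega
    · have : 1 ≤ wt (n/2) := ih (n/2) (by omega) (by omega)
      omega

lemma card_genE_formula : ∀ m, 1 ≤ m → (genE m).card = 4 * 3 ^ (wt m - 1) := by
  intro m
  induction m using Nat.strong_induction_on with
  | _ m ih =>
    intro hm
    rcases eq_or_ne m 1 with rfl | hm1
    · rw [card_genE_one, wt_def (by omega)]
      norm_num [wt_zero]
    rcases (by omega : m % 2 = 0 ∨ m % 2 = 1) with hpar | hpar
    · rw [card_genE_even (by omega) hpar, ih (m/2) (by omega) (by omega),
        wt_def (show m ≠ 0 by omega), hpar]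
      norm_num
    · have hm3 : 3 ≤ m := by omega
      rw [card_genE_odd hm3 hpar, ih (m-1) (by omega) (by omega)]
      have hw1 : wt m = wt (m-1) + 1 := by
        rw [wt_def (show m ≠ 0 by omega), wt_def (show m - 1 ≠ 0 by omega)]
        have h2 : m / 2 = (m-1)/2 := by omega
        rw [h2]
        omega
      have hw2 : 1 ≤ wt (m-1) := wt_pos (m-1) (by omega)
      rw [hw1]
      rw [show wt (m-1) + 1 - 1 = (wt (m-1) - 1) + 1 by omega, pow_succ]
      ring

lemma genLe_split {n : ℕ} (hn : 1 ≤ n) : genLe n = genLe (n-1) ∪ genE (n-1) := by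
  ext p
  rw [Finset.mem_union, mem_genLe, mem_genLe, mem_genE]
  exact enat_lt_split hn

lemma card_genLe_succ {n : ℕ} (hn : 1 ≤ n) :
    (genLe n).card = (genLe (n-1)).card + (genE (n-1)).card := by
  rw [genLe_split hn, Finset.card_union_of_disjoint]
  rw [Finset.disjoint_left]
  intro p hp1 hp2
  rw [mem_genLe] at hp1
  rw [mem_genE] at hp2
  rw [hp2] at hp1
  exact absurd hp1 (lt_irrefl _)

lemma genLe_one : genLe 1 = {((0:ℤ), (0:ℤ))} := by
  ext p
  rw [mem_genLe, Finset.mem_singleton]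
  constructor
  · intro h
    have hlb := Dz_lb p
    have h2 := lt_of_le_of_lt hlb h
    have : p.1.natAbs + p.2.natAbs < 1 := by exact_mod_cast h2
    have h3 : p.1 = 0 ∧ p.2 = 0 := by omega
    exact Prod.ext h3.1 h3.2
  · rintro rfl
    rw [Dz_zero]
    exact_mod_cast (by omega : 0 < 1)

/-- **Theorem 3(ii).** For the Ulam-Warburton cellular automaton, `u 1 = 1`
and, for every `n ≥ 2`, `u n = 4 * 3^(wt (n-1) - 1)`. -/
theorem ulam_warburton_formula
    (S : ℕ → Finset (ℤ × ℤ))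
    (hS0 : S 0 = ∅)
    (hS1 : S 1 = {((0 : ℤ), (0 : ℤ))})
    (hstep : ∀ n, 1 ≤ n → ∀ p : ℤ × ℤ,
      p ∈ S (n + 1) ↔ p ∈ S n ∨ (p ∉ S n ∧ (vnNbrs p ∩ S n).card = 1))
    (u : ℕ → ℕ)
    (hu0 : u 0 = 0)
    (hu : ∀ n, 1 ≤ n → u n = (S n).card - (S (n - 1)).card) :
    u 1 = 1 ∧ ∀ n, 2 ≤ n → u n = 4 * 3 ^ (wt (n - 1) - 1) := by
  have Seq : ∀ n, 1 ≤ n → S n = genLe n := by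
    intro n
    induction n with
    | zero => omega
    | succ n ihn =>
      intro _
      rcases Nat.eq_zero_or_pos n with rfl | hn1
      · rw [hS1, genLe_one]
      · have hSn := ihn hn1
        ext p
        rw [hstep n hn1 p, hSn]
        simp only [mem_genLe]
        exact (gen_step hn1 p).symm
  constructor
  · rw [hu 1 le_rfl, hS1, hS0]
    simp
  · intro n hn
    rw [hu n (by omega), Seq n (by omega), Seq (n-1) (by omega)]
    have hsplit := card_genLe_succ (show 1 ≤ n by omega)
    rw [hsplit, card_genE_formula (n-1) (by omega)]
    omega
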